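/- Let P be a d-dimensional simplicial reflexive polytope with centrally symmetric facets F, −F, where the vertices of F are e_1, …, e_d. Then every vertex of P lies in {±e_1, …, ±e_d} ∪ {v^1, …, v^d}, where v^i is the unique vertex of P contained in the unique facet intersecting F in conv(e_j : j ≠ i) other than the e_j, j ≠ i. In particular P has at most 3d vertices. -/

import Mathlib

open Pointwise Matrix

/-- Ambient space `ℝ^d`. -/
abbrev E (d : ℕ) := Fin d → ℝ

/-- A point of the lattice `M ≅ ℤ^d`. -/
def IsLatticePt {d : ℕ} (x : E d) : Prop := ∀ i, ∃ n : ℤ, x i = (n : ℝ)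

/-- The standard pairing between `N_ℝ` and `M_ℝ`. -/
def dot {d : ℕ} (x y : E d) : ℝ := ∑ i, x i * y i

/-- The dual (polar) polytope `P* = {x : ⟨x,y⟩ ≥ -1 ∀ y ∈ P}`. -/
def polarDual {d : ℕ} (P : Set (E d)) : Set (E d) := {x | ∀ y ∈ P, -1 ≤ dot x y}

/-- A lattice polytope: convex hull of finitely many lattice points. -/
def IsLatticePolytope {d : ℕ} (P : Set (E d)) : Prop :=
  ∃ S : Finset (E d), (∀ x ∈ S, IsLatticePt x) ∧ P = convexHull ℝ (S : Set (E d))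

/-- A reflexive polytope: a lattice polytope with `0` in its interior whose polar dual is
again a lattice polytope (i.e. the hull of its lattice points). -/
def IsReflexive {d : ℕ} (P : Set (E d)) : Prop :=
  IsLatticePolytope P ∧ 0 ∈ interior P ∧
    polarDual P = convexHull ℝ {x | x ∈ polarDual P ∧ IsLatticePt x}

/-- A facet: a nonempty exposed face of dimension `d - 1`. -/
def IsFacet {d : ℕ} (P F : Set (E d)) : Prop :=
  IsExposed ℝ P F ∧ F.Nonempty ∧
    Module.finrank ℝ (affineSpan ℝ F).direction = d - 1

/-- Simplicial polytope: every facet is a simplex (hull of `d` affinely independent points). -/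
def IsSimplicial {d : ℕ} (P : Set (E d)) : Prop :=
  ∀ F, IsFacet P F → ∃ v : Fin d → E d,
    AffineIndependent ℝ v ∧ F = convexHull ℝ (Set.range v)

/-- Pseudo-symmetric: some facet `F` has `-F` also a facet. -/
def IsPseudoSymmetric {d : ℕ} (P : Set (E d)) : Prop :=
  ∃ F, IsFacet P F ∧ IsFacet P (-F)

/-- Application of an integer matrix to a point of `ℝ^d`. -/
def applyU {d : ℕ} (U : Matrix (Fin d) (Fin d) ℤ) (x : E d) : E d :=
  (U.map (Int.cast : ℤ → ℝ)) *ᵥ x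

/-- Wirth matrix: block form `[[2·Id_f, 0], [C, Id_{d-f}]]` with `C` a `{0,1}`-matrix
each of whose columns has an odd number of `1`'s. -/
def IsWirth {d : ℕ} (A : Matrix (Fin d) (Fin d) ℤ) : Prop :=
  ∃ f : ℕ, f < d ∧
    (∀ i j : Fin d, (i : ℕ) < f → (j : ℕ) < f → A i j = if i = j then 2 else 0) ∧
    (∀ i j : Fin d, (i : ℕ) < f → f ≤ (j : ℕ) → A i j = 0) ∧
    (∀ i j : Fin d, f ≤ (i : ℕ) → (j : ℕ) < f → A i j = 0 ∨ A i j = 1) ∧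
    (∀ i j : Fin d, f ≤ (i : ℕ) → f ≤ (j : ℕ) → A i j = if i = j then 1 else 0) ∧
    (∀ j : Fin d, (j : ℕ) < f →
      Odd (Finset.univ.filter (fun i : Fin d => f ≤ (i : ℕ) ∧ A i j = 1)).card)


section Helpers
variable {d : ℕ}

lemma dot_single (q : E d) (i : Fin d) : dot q (Pi.single i 1) = q i := by
  simp [dot, Pi.single_apply, Finset.sum_ite_eq', mul_ite]

lemma smul_dot (c : ℝ) (x y : E d) : dot (c • x) y = c * dot x y := by
  simp [dot, Finset.mul_sum, mul_assoc]

lemma add_dot (x x' y : E d) : dot (x + x') y = dot x y + dot x' y := by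
  simp [dot, add_mul, Finset.sum_add_distrib]

lemma neg_dot (x y : E d) : dot (-x) y = -dot x y := by
  simp [dot, Finset.sum_neg_distrib]

lemma dot_neg (x y : E d) : dot x (-y) = -dot x y := by
  simp [dot, Finset.sum_neg_distrib]

lemma dot_smul (c : ℝ) (x y : E d) : dot x (c • y) = c * dot x y := by
  simp [dot, Finset.mul_sum, mul_left_comm]

lemma sub_dot (x x' y : E d) : dot (x - x') y = dot x y - dot x' y := by
  simp [dot, sub_mul, Finset.sum_sub_distrib]

lemma dot_sum {ι : Type*} (s : Finset ι) (x : E d) (f : ι → E d) :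
    dot x (∑ i ∈ s, f i) = ∑ i ∈ s, dot x (f i) := by
  simp [dot, Finset.mul_sum]
  rw [Finset.sum_comm]

lemma exists_vec (l : E d →L[ℝ] ℝ) : ∃ z : E d, ∀ y, dot z y = l y := by
  refine ⟨fun i => l (Pi.single i 1), fun y => ?_⟩
  have h : y = ∑ i, y i • (Pi.single i (1:ℝ) : E d) := by
    funext j
    simp [Pi.single_apply, Finset.sum_apply, Finset.sum_ite_eq']
  conv_rhs => rw [h]
  rw [map_sum]
  simp [dot, _root_.map_smul, mul_comm]

lemma eq_zero_of_dot_li (q : E d) (w : Fin d → E d) (hw : LinearIndependent ℝ w)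
    (h : ∀ j, dot q (w j) = 0) : q = 0 := by
  rcases Nat.eq_zero_or_pos d with rfl | hd
  · funext i; exact absurd i.2 (by omega)
  haveI : Nonempty (Fin d) := ⟨⟨0, hd⟩⟩
  have hcard : Fintype.card (Fin d) = Module.finrank ℝ (E d) := by
    simp [Module.finrank_fin_fun]
  let b := basisOfLinearIndependentOfCardEqFinrank hw hcard
  have hb : ⇑b = w := coe_basisOfLinearIndependentOfCardEqFinrank hw hcard
  have key : ∀ y : E d, dot q y = 0 := by
    intro y
    have hy : y = ∑ j, b.repr y j • w j := by
      conv_lhs => rw [← b.sum_repr y]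
      simp [hb]
    rw [hy, dot_sum]
    simp [dot_smul, h]
  funext i
  simpa [dot_single] using key (Pi.single i 1)

lemma facet_normal (P G : Set (E d)) (hd : 0 < d) (h0 : 0 ∈ interior P) (hG : IsFacet P G) :
    ∃ u : E d, (∀ y ∈ P, dot u y ≤ 1) ∧ (∀ x, x ∈ G ↔ x ∈ P ∧ dot u x = 1) := by
  obtain ⟨l, hl⟩ := hG.1 hG.2.1
  obtain ⟨g, hg⟩ := hG.2.1
  have hgP : g ∈ P := by rw [hl] at hg; exact hg.1
  have hgmax : ∀ y ∈ P, l y ≤ l g := by rw [hl] at hg; exact hg.2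
  set c := l g with hc
  have hGc : ∀ x, x ∈ G ↔ x ∈ P ∧ l x = c := by
    intro x
    constructor
    · intro hx
      rw [hl] at hx
      exact ⟨hx.1, le_antisymm (hgmax x hx.1) (hx.2 g hgP)⟩
    · rintro ⟨hxP, hxc⟩
      rw [hl]
      exact ⟨hxP, fun y hy => (hgmax y hy).trans hxc.ge⟩
  have h0P : (0 : E d) ∈ P := interior_subset h0
  have hc0 : 0 ≤ c := by simpa using hgmax 0 h0P
  obtain ⟨ε, hε, hball⟩ : ∃ ε > 0, Metric.ball (0 : E d) ε ⊆ P := by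
    rw [mem_interior_iff_mem_nhds, Metric.mem_nhds_iff] at h0
    exact h0
  have hcpos : 0 < c := by
    rcases hc0.lt_or_eq with h | h
    · exact h
    exfalso
    have hl0 : ∀ y : E d, l y = 0 := by
      intro y
      have key : ∀ w : E d, w ∈ Metric.ball (0 : E d) ε → l w ≤ 0 := by
        intro w hw
        exact (hgmax w (hball hw)).trans h.ge
      rcases eq_or_ne y 0 with rfl | hy
      · simp
      have hny : 0 < ‖y‖ := norm_pos_iff.2 hy
      set δ := ε / (2 * ‖y‖) with hδ
      have hδpos : 0 < δ := by positivity
      have hmem : ∀ s : ℝ, |s| = δ → (s • y) ∈ Metric.ball (0 : E d) ε := by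
        intro s hs
        rw [Metric.mem_ball, dist_zero_right, norm_smul, Real.norm_eq_abs, hs, hδ]
        rw [div_mul_eq_mul_div, mul_comm]
        calc ‖y‖ * ε / (2 * ‖y‖) = ε / 2 := by field_simp
        _ < ε := by linarith
      have h1 := key (δ • y) (hmem δ (abs_of_pos hδpos))
      have h2 := key ((-δ) • y) (hmem (-δ) (by rw [abs_neg, abs_of_pos hδpos]))
      rw [l.map_smul] at h1 h2
      simp only [smul_eq_mul, neg_mul] at h1 h2
      nlinarith
    have hGP : G = P := by
      ext x
      rw [hGc]
      constructor
      · exact fun h => h.1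
      · intro hx
        exact ⟨hx, (hl0 x).trans h⟩
    have htop : (affineSpan ℝ G).direction = ⊤ := by
      rw [eq_top_iff]
      intro w _
      rcases eq_or_ne w 0 with rfl | hw
      · exact Submodule.zero_mem _
      have hnw : 0 < ‖w‖ := norm_pos_iff.2 hw
      set δ := ε / (2 * ‖w‖) with hδ
      have hδpos : 0 < δ := by positivity
      have hmem : (δ • w) ∈ P := by
        apply hball
        rw [Metric.mem_ball, dist_zero_right, norm_smul, Real.norm_eq_abs,
          abs_of_pos hδpos, hδ]
        rw [div_mul_eq_mul_div, mul_comm]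
        calc ‖w‖ * ε / (2 * ‖w‖) = ε / 2 := by field_simp
        _ < ε := by linarith
      have h1 : (δ • w) ∈ affineSpan ℝ G := subset_affineSpan ℝ G (by rw [hGP]; exact hmem)
      have h2 : (0 : E d) ∈ affineSpan ℝ G := subset_affineSpan ℝ G (by rw [hGP]; exact h0P)
      have h3 : (δ • w) - 0 ∈ (affineSpan ℝ G).direction :=
        AffineSubspace.vsub_mem_direction h1 h2
      rw [sub_zero] at h3
      have := Submodule.smul_mem (affineSpan ℝ G).direction δ⁻¹ h3
      rwa [smul_smul, inv_mul_cancel₀ hδpos.ne', one_smul] at this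
    have hdim := hG.2.2
    rw [htop, finrank_top] at hdim
    rw [Module.finrank_fin_fun] at hdim
    omega
  obtain ⟨z, hz⟩ := exists_vec l
  refine ⟨c⁻¹ • z, ?_, ?_⟩
  · intro y hy
    rw [smul_dot, hz]
    rw [inv_mul_le_iff₀ hcpos, mul_one]
    exact hgmax y hy
  · intro x
    rw [hGc x, smul_dot, hz]
    constructor
    · rintro ⟨hxP, hxc⟩
      exact ⟨hxP, by rw [hxc, inv_mul_cancel₀ hcpos.ne']⟩
    · rintro ⟨hxP, hxc⟩
      refine ⟨hxP, ?_⟩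
      field_simp at hxc
      linarith [hxc]

lemma normal_lattice (P : Set (E d)) (hP : IsReflexive P) (z : E d) (w : Fin d → E d)
    (hw : LinearIndependent ℝ w) (hwP : ∀ j, w j ∈ P) (hz : ∀ y ∈ P, -1 ≤ dot z y)
    (hzw : ∀ j, dot z (w j) = -1) : IsLatticePt z := by
  have hext : z ∈ Set.extremePoints ℝ (polarDual P) := by
    refine ⟨hz, fun x hx y hy hseg => ?_⟩
    obtain ⟨a, b, ha, hb, hab, habz⟩ := hseg
    have hxz : x = z := by
      have hxw : ∀ j, dot x (w j) = -1 := by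
        intro j
        have h1 : -1 ≤ dot x (w j) := hx _ (hwP j)
        have h2 : -1 ≤ dot y (w j) := hy _ (hwP j)
        have h3 : a * dot x (w j) + b * dot y (w j) = -1 := by
          rw [← smul_dot, ← smul_dot, ← add_dot, habz, hzw]
        nlinarith
      have : x - z = 0 := by
        apply eq_zero_of_dot_li _ w hw
        intro j
        rw [sub_dot, hxw, hzw]; ring
      exact sub_eq_zero.1 this
    exact hxz
  rw [hP.2.2] at hext
  exact (extremePoints_convexHull_subset hext).2

lemma extreme_mem_subset {P B : Set (E d)} {x : E d} (hBP : B ⊆ P)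
    (hx : x ∈ Set.extremePoints ℝ P) (hxB : x ∈ B) : x ∈ Set.extremePoints ℝ B :=
  ⟨hxB, fun _ hx1 _ hx2 h => hx.2 (hBP hx1) (hBP hx2) h⟩

lemma neg_extreme {A : Set (E d)} {x : E d} (hx : x ∈ Set.extremePoints ℝ A) :
    -x ∈ Set.extremePoints ℝ (-A) := by
  refine ⟨Set.neg_mem_neg.2 hx.1, fun x1 hx1 x2 hx2 h => ?_⟩
  obtain ⟨a, b, ha, hb, hab, habz⟩ := h
  have h' : x ∈ openSegment ℝ (-x1) (-x2) := by
    refine ⟨a, b, ha, hb, hab, ?_⟩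
    rw [smul_neg, smul_neg, ← neg_add, habz, neg_neg]
  have := hx.2 (Set.mem_neg.1 hx1) (Set.mem_neg.1 hx2) h'
  rw [← neg_neg x1, this]

lemma extreme_lattice {P : Set (E d)} (hP : IsLatticePolytope P) {x : E d}
    (hx : x ∈ Set.extremePoints ℝ P) : IsLatticePt x := by
  obtain ⟨S, hS, rfl⟩ := hP
  exact hS x (extremePoints_convexHull_subset hx)

lemma dot_int {x y : E d} (hx : IsLatticePt x) (hy : IsLatticePt y) :
    ∃ n : ℤ, dot x y = (n : ℝ) := by
  choose n hn using hx
  choose m hm using hy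
  refine ⟨∑ i, n i * m i, ?_⟩
  rw [dot]
  push_cast
  exact Finset.sum_congr rfl fun i _ => by rw [hn, hm]

lemma ncard_range_le' {α : Type*} [DecidableEq α] (f : Fin d → α) :
    (Set.range f).ncard ≤ d := by
  rw [← Set.image_univ, ← Finset.coe_univ, ← Finset.coe_image, Set.ncard_coe_finset]
  calc (Finset.univ.image f).card ≤ Finset.univ.card := Finset.card_image_le
  _ = d := by simp [Finset.card_univ]

lemma ncard_range_inj {α : Type*} [DecidableEq α] (f : Fin d → α)
    (hf : Function.Injective f) : (Set.range f).ncard = d := by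
  rw [← Set.image_univ, ← Finset.coe_univ, ← Finset.coe_image, Set.ncard_coe_finset]
  rw [Finset.card_image_of_injective _ hf]
  simp [Finset.card_univ]

lemma simplex_vertex_extreme (hd : 0 < d) (e : Fin d → E d) (he : LinearIndependent ℝ e)
    (k : Fin d) : e k ∈ Set.extremePoints ℝ (convexHull ℝ (Set.range e)) := by
  haveI : Nonempty (Fin d) := ⟨⟨0, hd⟩⟩
  have hcard : Fintype.card (Fin d) = Module.finrank ℝ (E d) := by
    simp [Module.finrank_fin_fun]
  let b := basisOfLinearIndependentOfCardEqFinrank he hcard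
  have hb : ⇑b = e := coe_basisOfLinearIndependentOfCardEqFinrank he hcard
  have hcoord : ∀ z ∈ convexHull ℝ (Set.range e),
      (∀ i, 0 ≤ b.repr z i) ∧ ∑ i, b.repr z i = 1 := by
    have h1 : ∀ i : Fin d, convexHull ℝ (Set.range e) ⊆ {z | 0 ≤ b.repr z i} := by
      intro i
      apply convexHull_min
      · rintro _ ⟨j, rfl⟩
        have : e j = b j := by rw [hb]
        rw [Set.mem_setOf_eq, this, b.repr_self]
        simp [Finsupp.single_apply]
        split <;> norm_num
      · exact convex_halfSpace_ge (IsLinearMap.mk (fun x y => by simp) (fun c x => by simp)) 0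
    have h2 : convexHull ℝ (Set.range e) ⊆ {z | ∑ i, b.repr z i = 1} := by
      apply convexHull_min
      · rintro _ ⟨j, rfl⟩
        have : e j = b j := by rw [hb]
        rw [Set.mem_setOf_eq, this, b.repr_self]
        simp [Finsupp.single_apply]
      · exact convex_hyperplane (IsLinearMap.mk (fun x y => by simp [Finset.sum_add_distrib])
          (fun c x => by simp [Finset.mul_sum])) 1
    exact fun z hz => ⟨fun i => h1 i hz, h2 hz⟩
  refine ⟨subset_convexHull ℝ _ ⟨k, rfl⟩, fun x hx y hy hseg => ?_⟩
  obtain ⟨a, c, ha, hc, hac, habz⟩ := hseg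
  obtain ⟨hx0, hx1⟩ := hcoord x hx
  obtain ⟨hy0, hy1⟩ := hcoord y hy
  have hek : ∀ i, b.repr (e k) i = if k = i then 1 else 0 := by
    intro i
    have : e k = b k := by rw [hb]
    rw [this, b.repr_self]
    simp [Finsupp.single_apply]
  have hxk1 : b.repr x k ≤ 1 := by
    calc b.repr x k ≤ ∑ i, b.repr x i :=
      Finset.single_le_sum (fun i _ => hx0 i) (Finset.mem_univ k)
    _ = 1 := hx1
  have hyk1 : b.repr y k ≤ 1 := by
    calc b.repr y k ≤ ∑ i, b.repr y i :=
      Finset.single_le_sum (fun i _ => hy0 i) (Finset.mem_univ k)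
    _ = 1 := hy1
  have hcomb : a * b.repr x k + c * b.repr y k = 1 := by
    have := congrArg (fun z => b.repr z k) habz
    simp only [map_add, LinearEquiv.map_smul, Finsupp.coe_add, Finsupp.coe_smul, Pi.add_apply,
      Pi.smul_apply, smul_eq_mul, hek k, if_pos rfl] at this
    simpa using this
  have hxk : b.repr x k = 1 := by nlinarith
  have hyk : b.repr y k = 1 := by nlinarith
  have hxeq : x = e k := by
    have hrest : ∀ i, i ≠ k → b.repr x i = 0 := by
      intro i hi
      have hsum : ∑ i ∈ Finset.univ.erase k, b.repr x i = 0 := by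
        rw [← Finset.sum_erase_add _ _ (Finset.mem_univ k)] at hx1
        rw [hxk] at hx1
        linarith
      exact (Finset.sum_eq_zero_iff_of_nonneg
        (fun i _ => hx0 i)).1 hsum i (Finset.mem_erase.2 ⟨hi, Finset.mem_univ i⟩)
    have : ∀ i, b.repr x i = b.repr (e k) i := by
      intro i
      rcases eq_or_ne i k with rfl | hi
      · rw [hxk, hek]; simp
      · rw [hrest i hi, hek]; simp [Ne.symm hi]
    exact b.repr.injective (Finsupp.ext this)
  have hyeq : y = e k := by
    have hrest : ∀ i, i ≠ k → b.repr y i = 0 := by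
      intro i hi
      have hsum : ∑ i ∈ Finset.univ.erase k, b.repr y i = 0 := by
        rw [← Finset.sum_erase_add _ _ (Finset.mem_univ k)] at hy1
        rw [hyk] at hy1
        linarith
      exact (Finset.sum_eq_zero_iff_of_nonneg
        (fun i _ => hy0 i)).1 hsum i (Finset.mem_erase.2 ⟨hi, Finset.mem_univ i⟩)
    have : ∀ i, b.repr y i = b.repr (e k) i := by
      intro i
      rcases eq_or_ne i k with rfl | hi
      · rw [hyk, hek]; simp
      · rw [hrest i hi, hek]; simp [Ne.symm hi]
    exact b.repr.injective (Finsupp.ext this)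
  exact hxeq

end Helpers

theorem vertices_of_pseudoSymmetric (d : ℕ) (P F : Set (E d)) (e v' : Fin d → E d)
    (hP : IsReflexive P) (hsimp : IsSimplicial P)
    (hF : IsFacet P F) (hFneg : IsFacet P (-F))
    (he : LinearIndependent ℝ e) (hFe : F = convexHull ℝ (Set.range e))
    (hv' : ∀ i, v' i ∈ Set.extremePoints ℝ P ∧
      ∃ G, IsFacet P G ∧ G ≠ F ∧ F ∩ G = convexHull ℝ (e '' {j | j ≠ i}) ∧
        v' i ∈ G ∧ v' i ∉ Set.range e) :
    Set.extremePoints ℝ P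
        ⊆ Set.range e ∪ Set.range (fun i => -(e i)) ∪ Set.range v' ∧
    (Set.extremePoints ℝ P).ncard ≤ 3 * d := by
  classical
  rcases Nat.eq_zero_or_pos d with rfl | hd
  · exfalso
    obtain ⟨x, hx⟩ := hF.2.1
    rw [hFe, Set.range_eq_empty, convexHull_empty] at hx
    exact hx
  haveI : Nonempty (Fin d) := ⟨⟨0, hd⟩⟩
  have h0P : 0 ∈ interior P := hP.2.1
  have hFP : F ⊆ P := hF.1.subset
  have hFnP : -F ⊆ P := hFneg.1.subset
  obtain ⟨u, hu1, hu2⟩ := facet_normal P F hd h0P hF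
  obtain ⟨u', hu'1, hu'2⟩ := facet_normal P (-F) hd h0P hFneg
  have heF : ∀ i, e i ∈ F := fun i => hFe ▸ subset_convexHull ℝ _ ⟨i, rfl⟩
  have heP : ∀ i, e i ∈ P := fun i => hFP (heF i)
  have hue : ∀ i, dot u (e i) = 1 := fun i => ((hu2 _).1 (heF i)).2
  have hu'e : ∀ i, dot u' (e i) = -1 := by
    intro i
    have h1 : dot u' (-(e i)) = 1 := ((hu'2 _).1 (Set.neg_mem_neg.2 (heF i))).2
    rw [dot_neg] at h1; linarith
  have hu'u : u' = -u := by
    have h : u' - (-u) = 0 := by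
      apply eq_zero_of_dot_li _ e he
      intro j
      rw [sub_dot, neg_dot, hu'e, hue]; ring
    exact sub_eq_zero.1 h
  have hulow : ∀ y ∈ P, -1 ≤ dot u y := by
    intro y hy
    have := hu'1 y hy; rw [hu'u, neg_dot] at this; linarith
  have humem : ∀ y ∈ P, dot u y = -1 → y ∈ -F := by
    intro y hy h
    exact (hu'2 y).2 ⟨hy, by rw [hu'u, neg_dot, h]; ring⟩
  have hnulat : IsLatticePt (-u) := by
    apply normal_lattice P hP (-u) e he heP
    · intro y hy; rw [neg_dot]; linarith [hu1 y hy]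
    · intro j; rw [neg_dot, hue]
  -- basis from e
  have hcard : Fintype.card (Fin d) = Module.finrank ℝ (E d) := by
    simp [Module.finrank_fin_fun]
  let b := basisOfLinearIndependentOfCardEqFinrank he hcard
  have hb : ⇑b = e := coe_basisOfLinearIndependentOfCardEqFinrank he hcard
  have heext : ∀ i, e i ∈ Set.extremePoints ℝ P := by
    intro i
    have h1 := simplex_vertex_extreme hd e he i
    rw [← hFe] at h1
    exact (hF.1.isExtreme).extremePoints_subset_extremePoints h1
  have hmain : Set.extremePoints ℝ P
      ⊆ Set.range e ∪ Set.range (fun i => -(e i)) ∪ Set.range v' := by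
    intro v hv
    have hvP : v ∈ P := hv.1
    have hvlat : IsLatticePt v := extreme_lattice hP.1 hv
    obtain ⟨n, hn⟩ := dot_int hnulat hvlat
    rw [neg_dot] at hn
    have hle1 : dot u v ≤ 1 := hu1 v hvP
    have hgem1 : -1 ≤ dot u v := hulow v hvP
    have hncases : dot u v = 1 ∨ dot u v = 0 ∨ dot u v = -1 := by
      have hi1 : (-1:ℤ) ≤ n := by
        have : (-1:ℝ) ≤ (n:ℝ) := by rw [← hn]; linarith
        exact_mod_cast this
      have hi2 : n ≤ 1 := by
        have : (n:ℝ) ≤ 1 := by rw [← hn]; linarith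
        exact_mod_cast this
      have hdv : dot u v = -(n:ℝ) := by linarith [hn]
      interval_cases n <;> simp [hdv] <;> norm_num
    rcases hncases with h1 | h0 | hm1
    · -- v ∈ F
      refine Set.mem_union_left _ (Set.mem_union_left _ ?_)
      have hvF : v ∈ F := (hu2 v).2 ⟨hvP, h1⟩
      have h2 := extreme_mem_subset hFP hv hvF
      rw [hFe] at h2
      exact extremePoints_convexHull_subset h2
    swap
    · -- v ∈ -F
      refine Set.mem_union_left _ (Set.mem_union_right _ ?_)
      have hvF : v ∈ -F := humem v hvP hm1
      have h2 := extreme_mem_subset hFnP hv hvF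
      have h3 := neg_extreme h2
      rw [neg_neg, hFe] at h3
      obtain ⟨i, hi⟩ := extremePoints_convexHull_subset h3
      exact ⟨i, by simp only []; rw [hi, neg_neg]⟩
    -- level 0 : hard case
    have hvsum : v = ∑ i, (b.repr v i) • e i := by
      conv_lhs => rw [← b.sum_repr v]
      rw [hb]
    have hsumc : ∑ i, b.repr v i = 0 := by
      rw [hvsum, dot_sum] at h0
      simpa [dot_smul, hue] using h0
    have hvne : v ≠ 0 := by
      rintro rfl
      obtain ⟨ε, hε, hball⟩ : ∃ ε > 0, Metric.ball (0 : E d) ε ⊆ P := by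
        rw [mem_interior_iff_mem_nhds, Metric.mem_nhds_iff] at h0P
        exact h0P
      set w : E d := Pi.single ⟨0, hd⟩ (ε/2) with hwdef
      have hwball : ∀ s : E d, ‖s‖ < ε → s ∈ P := fun s hs =>
        hball (by rwa [Metric.mem_ball, dist_zero_right])
      have hnw : ‖w‖ = ε/2 := by
        rw [hwdef, Pi.norm_single, Real.norm_eq_abs, abs_of_pos (by linarith)]
      have hwP : w ∈ P := hwball w (by rw [hnw]; linarith)
      have hwP' : -w ∈ P := hwball (-w) (by rw [norm_neg, hnw]; linarith)
      have hseg : (0 : E d) ∈ openSegment ℝ w (-w) := by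
        refine ⟨1/2, 1/2, by norm_num, by norm_num, by norm_num, ?_⟩
        rw [smul_neg, add_neg_cancel]
      have := hv.2 hwP hwP' hseg
      have h2 := congrFun this ⟨0, hd⟩
      rw [hwdef, Pi.single_eq_same] at h2
      simp at h2
      linarith
    obtain ⟨k, hk⟩ : ∃ k, b.repr v k < 0 := by
      by_contra hcon
      push_neg at hcon
      have hall : ∀ i ∈ Finset.univ, b.repr v i = 0 :=
        (Finset.sum_eq_zero_iff_of_nonneg (fun i _ => hcon i)).1 hsumc
      apply hvne
      rw [hvsum]
      exact Finset.sum_eq_zero fun i _ => by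
        rw [hall i (Finset.mem_univ i), zero_smul]
    obtain ⟨G, hG, hGF, hFG, hv'G, hv'ne⟩ := (hv' k).2
    obtain ⟨uk, huk1, huk2⟩ := facet_normal P G hd h0P hG
    have hGP : G ⊆ P := hG.1.subset
    have heG : ∀ j, j ≠ k → e j ∈ G := by
      intro j hj
      have h1 : e j ∈ F ∩ G := by
        rw [hFG]
        exact subset_convexHull ℝ _ ⟨j, hj, rfl⟩
      exact h1.2
    have huke : ∀ j, j ≠ k → dot uk (e j) = 1 := fun j hj => ((huk2 _).1 (heG j hj)).2
    have hukv' : dot uk (v' k) = 1 := ((huk2 _).1 hv'G).2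
    have hak : dot uk (e k) < 1 := by
      rcases (huk1 (e k) (heP k)).lt_or_eq with h | h
      · exact h
      exfalso
      have hekG : e k ∈ G := (huk2 _).2 ⟨heP k, h⟩
      have hmem : e k ∈ convexHull ℝ (e '' {j | j ≠ k}) := by
        rw [← hFG]; exact ⟨heF k, hekG⟩
      have hsub : convexHull ℝ (e '' {j | j ≠ k}) ⊆ {z | b.repr z k = 0} := by
        apply convexHull_min
        · rintro _ ⟨j, hj, rfl⟩
          have hje : e j = b j := by rw [hb]
          rw [Set.mem_setOf_eq, hje, b.repr_self]
          simp [Finsupp.single_apply]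
          intro hjk
          exact absurd hjk hj
        · exact convex_hyperplane (IsLinearMap.mk (fun x y => by simp)
            (fun c x => by simp)) 0
      have h1 := hsub hmem
      rw [Set.mem_setOf_eq] at h1
      have hke : e k = b k := by rw [hb]
      rw [hke, b.repr_self] at h1
      simp at h1
    -- vertex family of G
    obtain ⟨bb, hbbind, hGbb⟩ := hsimp G hG
    set w : Fin d → E d := fun j => if j = k then v' k else e j with hwdef
    have hwG : ∀ j, w j ∈ G := by
      intro j
      rw [hwdef]
      rcases eq_or_ne j k with rfl | hj
      · simpa using hv'G
      · simpa [hj] using heG j hj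
    have hwP : ∀ j, w j ∈ P := fun j => hGP (hwG j)
    have hwdot : ∀ j, dot uk (w j) = 1 := fun j => ((huk2 _).1 (hwG j)).2
    have hwext : ∀ j, w j ∈ Set.extremePoints ℝ P := by
      intro j
      rw [hwdef]
      rcases eq_or_ne j k with rfl | hj
      · simpa using (hv' j).1
      · simpa [hj] using heext j
    have hwinj : Function.Injective w := by
      intro j1 j2 hj
      rw [hwdef] at hj
      simp only [] at hj
      by_cases h1 : j1 = k <;> by_cases h2 : j2 = k
      · rw [h1, h2]
      · rw [if_pos h1, if_neg h2] at hj
        exact absurd ⟨j2, hj.symm⟩ hv'ne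
      · rw [if_neg h1, if_pos h2] at hj
        exact absurd ⟨j1, hj⟩ hv'ne
      · rw [if_neg h1, if_neg h2] at hj
        exact he.injective hj
    have hsubbb : Set.range w ⊆ Set.range bb := by
      rintro x ⟨j, rfl⟩
      have h1 := extreme_mem_subset hGP (hwext j) (hwG j)
      rw [hGbb] at h1
      exact extremePoints_convexHull_subset h1
    have hrange_eq : Set.range w = Set.range bb := by
      exact Set.eq_of_subset_of_ncard_le hsubbb
        (by rw [ncard_range_inj w hwinj]; exact ncard_range_le' bb) (Set.finite_range bb)
    have hwaff : AffineIndependent ℝ w := by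
      have h1 : AffineIndependent ℝ ((↑) : Set.range bb → E d) := hbbind.range
      rw [← hrange_eq] at h1
      have h2 := h1.comp_embedding
        ⟨fun j => (⟨w j, Set.mem_range_self j⟩ : Set.range w),
          fun a b hab => hwinj (congrArg Subtype.val hab)⟩
      exact h2
    have hwli : LinearIndependent ℝ w := by
      rw [Fintype.linearIndependent_iff]
      intro g hg
      have hgsum : ∑ j, g j = 0 := by
        have h1 := congrArg (dot uk) hg
        rw [dot_sum] at h1
        simp only [dot_smul, hwdot, mul_one] at h1
        rwa [show dot uk (0 : E d) = 0 from by simp [dot]] at h1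
      exact fun j => affineIndependent_iff.1 hwaff Finset.univ g hgsum hg j (Finset.mem_univ j)
    have hnuklat : IsLatticePt (-uk) := by
      apply normal_lattice P hP (-uk) w hwli hwP
      · intro y hy; rw [neg_dot]; linarith [huk1 y hy]
      · intro j; rw [neg_dot, hwdot]
    have hukv : dot uk v = b.repr v k * (dot uk (e k) - 1) := by
      have h1 : dot uk v = ∑ i, b.repr v i * dot uk (e i) := by
        conv_lhs => rw [hvsum]
        rw [dot_sum]
        exact Finset.sum_congr rfl fun i _ => dot_smul _ _ _
      rw [h1, ← Finset.sum_erase_add _ _ (Finset.mem_univ k)]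
      have h3 : ∑ i ∈ Finset.univ.erase k, b.repr v i * dot uk (e i)
          = ∑ i ∈ Finset.univ.erase k, b.repr v i :=
        Finset.sum_congr rfl fun i hi => by
          rw [huke i (Finset.mem_erase.1 hi).1, mul_one]
      have h4 : ∑ i ∈ Finset.univ.erase k, b.repr v i = - b.repr v k := by
        have h5 := Finset.sum_erase_add Finset.univ (fun i => b.repr v i) (Finset.mem_univ k)
        rw [hsumc] at h5
        linarith
      rw [h3, h4]
      ring
    have hpos : 0 < dot uk v := by
      rw [hukv]
      have := mul_pos_of_neg_of_neg hk (by linarith : dot uk (e k) - 1 < 0)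
      linarith
    obtain ⟨m, hm⟩ := dot_int hnuklat hvlat
    rw [neg_dot] at hm
    have hukv1 : dot uk v = 1 := by
      have hle : dot uk v ≤ 1 := huk1 v hvP
      have hi1 : (-1:ℤ) ≤ m := by
        have : (-1:ℝ) ≤ (m:ℝ) := by rw [← hm]; linarith
        exact_mod_cast this
      have hi2 : m < 0 := by
        have : (m:ℝ) < 0 := by rw [← hm]; linarith
        exact_mod_cast this
      have hmeq : m = -1 := by omega
      rw [hmeq] at hm
      push_cast at hm
      linarith
    have hvG : v ∈ G := (huk2 v).2 ⟨hvP, hukv1⟩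
    have h5 := extreme_mem_subset hGP hv hvG
    rw [hGbb] at h5
    have h6 := extremePoints_convexHull_subset h5
    rw [← hrange_eq] at h6
    obtain ⟨j, hj⟩ := h6
    rcases eq_or_ne j k with rfl | hjk
    · refine Set.mem_union_right _ ⟨j, ?_⟩
      rw [← hj, hwdef]
      simp
    · exfalso
      have hvej : v = e j := by
        rw [← hj, hwdef]
        simp [hjk]
      rw [hvej, hue j] at h0
      norm_num at h0
  refine ⟨hmain, ?_⟩
  have hfin : (Set.range e ∪ Set.range (fun i => -(e i)) ∪ Set.range v').Finite :=
    ((Set.finite_range e).union (Set.finite_range _)).union (Set.finite_range v')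
  calc (Set.extremePoints ℝ P).ncard
      ≤ (Set.range e ∪ Set.range (fun i => -(e i)) ∪ Set.range v').ncard :=
        Set.ncard_le_ncard hmain hfin
    _ ≤ (Set.range e ∪ Set.range (fun i => -(e i))).ncard + (Set.range v').ncard :=
        Set.ncard_union_le _ _
    _ ≤ (Set.range e).ncard + (Set.range (fun i => -(e i))).ncard + (Set.range v').ncard := by
        have := Set.ncard_union_le (Set.range e) (Set.range (fun i => -(e i)))
        omega
    _ ≤ d + d + d := by
        have h1 := ncard_range_le' e
        have h2 := ncard_range_le' (fun i => -(e i))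
        have h3 := ncard_range_le' v'
        omega
    _ = 3 * d := by ring
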